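/- Let v₀, …, v_n be positive reals, u₁, …, u_n ∈ [0,1], and define the backward Metropolis runs A₀, …, A_n from them. If 0 ≤ k < n and v_k ≤ max{v_{k+1}, …, v_n}, then A_k = A_{k+1}; that is, a backward run started at a weight that does not strictly exceed all later proposed weights couples with the run started one step later. -/
import Mathlib


open MeasureTheory

/-- The Metropolis weight update: from current weight `w`, proposed weight `w'`, and
uniform draw `u`, accept the proposal iff `u ≤ min 1 (w'/w)`. -/
noncomputable def metroF (w w' u : ℝ) : ℝ := if u ≤ min 1 (w' / w) then w' else w

/-- The chain started at index `k`, after `m` steps: `B k = v k`,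
`B (k+m+1) = f (B (k+m)) (v (k+m+1)) (u (k+m+1))`. -/
noncomputable def backB (v u : ℕ → ℝ) (k : ℕ) : ℕ → ℝ
  | 0 => v k
  | m + 1 => metroF (backB v u k m) (v (k + m + 1)) (u (k + m + 1))

/-- The backward Metropolis run started at index `k ≤ n`: start at `v k` and apply the
Metropolis updates with proposals `v (k+1), …, v n` and draws `u (k+1), …, u n`; runs
started at different indices share the same pair `(v j, u j)` at each step `j`. -/
noncomputable def backA (v u : ℕ → ℝ) (n k : ℕ) : ℝ := backB v u k (n - k)

lemma backB_pos (v u : ℕ → ℝ) (hv : ∀ i, 0 < v i) (k : ℕ) :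
    ∀ m, 0 < backB v u k m := by
  intro m
  induction m with
  | zero => exact hv k
  | succ m ih =>
    show 0 < metroF (backB v u k m) (v (k + m + 1)) (u (k + m + 1))
    unfold metroF
    split
    · exact hv _
    · exact ih

lemma metroF_accept {w w' u : ℝ} (hw : 0 < w) (hww : w ≤ w') (hu : u ∈ Set.Icc (0:ℝ) 1) :
    metroF w w' u = w' := by
  unfold metroF
  rw [if_pos]
  have h1 : (1:ℝ) ≤ w' / w := (one_le_div hw).mpr hww
  rw [min_eq_left h1]
  exact hu.2

lemma metroF_reject_lt {w w' u : ℝ} (hw : 0 < w) (hu : u ∈ Set.Icc (0:ℝ) 1)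
    (h : ¬ u ≤ min 1 (w' / w)) : w' < w := by
  by_contra hc
  push_neg at hc
  exact h (by rw [min_eq_left ((one_le_div hw).mpr hc)]; exact hu.2)

lemma backB_inv (v u : ℕ → ℝ) (hv : ∀ i, 0 < v i) (hu : ∀ i, u i ∈ Set.Icc (0:ℝ) 1)
    (k : ℕ) : ∀ m, backB v u k (m + 1) = backB v u (k + 1) m ∨
      (backB v u k (m + 1) = v k ∧ backB v u (k + 1) m < v k) := by
  intro m
  induction m with
  | zero =>
    have hX : backB v u k (0 + 1) = metroF (v k) (v (k + 1)) (u (k + 1)) := by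
      show metroF (backB v u k 0) (v (k + 0 + 1)) (u (k + 0 + 1)) = _
      show metroF (v k) (v (k + 0 + 1)) (u (k + 0 + 1)) = _
      norm_num
    rw [hX]
    unfold metroF
    split
    · left; rfl
    · right
      exact ⟨rfl, metroF_reject_lt (hv k) (hu _) (by assumption)⟩
  | succ m ih =>
    have hX : backB v u k (m + 1 + 1)
        = metroF (backB v u k (m + 1)) (v (k + m + 2)) (u (k + m + 2)) := by
      show metroF _ (v (k + (m + 1) + 1)) (u (k + (m + 1) + 1)) = _
      congr 2 <;> omega
    have hY : backB v u (k + 1) (m + 1)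
        = metroF (backB v u (k + 1) m) (v (k + m + 2)) (u (k + m + 2)) := by
      show metroF _ (v (k + 1 + m + 1)) (u (k + 1 + m + 1)) = _
      congr 2 <;> omega
    rcases ih with heq | ⟨hXk, hYlt⟩
    · left; rw [hX, hY, heq]
    · have hYpos := backB_pos v u hv (k + 1) m
      rw [hX, hY, hXk]
      unfold metroF
      by_cases hacc : u (k + m + 2) ≤ min 1 (v (k + m + 2) / v k)
      · -- X accepts, so Y accepts too
        rw [if_pos hacc, if_pos]
        · left; rfl
        · refine le_trans hacc (le_min (min_le_left _ _) ?_)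
          refine le_trans (min_le_right _ _) ?_
          exact div_le_div_of_nonneg_left (hv _).le hYpos hYlt.le
      · rw [if_neg hacc]
        have hwlt : v (k + m + 2) < v k := metroF_reject_lt (hv k) (hu _) hacc
        right
        refine ⟨rfl, ?_⟩
        split
        · exact hwlt
        · exact hYlt

lemma backB_couple (v u : ℕ → ℝ) (hv : ∀ i, 0 < v i) (hu : ∀ i, u i ∈ Set.Icc (0:ℝ) 1)
    (k : ℕ) : ∀ m, (∃ i ≤ m, v k ≤ v (k + 1 + i)) →
      backB v u k (m + 1) = backB v u (k + 1) m := by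
  intro m
  induction m with
  | zero =>
    rintro ⟨i, hi, hvi⟩
    interval_cases i
    show metroF (v k) (v (k + 0 + 1)) (u (k + 0 + 1)) = v (k + 1)
    simp only [Nat.add_zero]
    exact metroF_accept (hv k) (by simpa using hvi) (hu _)
  | succ m ih =>
    rintro ⟨i, hi, hvi⟩
    have hX : backB v u k (m + 1 + 1)
        = metroF (backB v u k (m + 1)) (v (k + m + 2)) (u (k + m + 2)) := by
      show metroF _ (v (k + (m + 1) + 1)) (u (k + (m + 1) + 1)) = _
      congr 2 <;> omega
    have hY : backB v u (k + 1) (m + 1)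
        = metroF (backB v u (k + 1) m) (v (k + m + 2)) (u (k + m + 2)) := by
      show metroF _ (v (k + 1 + m + 1)) (u (k + 1 + m + 1)) = _
      congr 2 <;> omega
    rcases Nat.lt_succ_iff_lt_or_eq.mp (Nat.lt_succ_of_le hi) with hlt | heq
    · rw [hX, hY, ih ⟨i, Nat.lt_succ_iff.mp hlt, hvi⟩]
    · subst heq
      have hvk : v k ≤ v (k + m + 2) := by
        have : k + 1 + (m + 1) = k + m + 2 := by omega
        rwa [this] at hvi
      rcases backB_inv v u hv hu k m with heq2 | ⟨hXk, hYlt⟩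
      · rw [hX, hY, heq2]
      · have hYpos := backB_pos v u hv (k + 1) m
        rw [hX, hY, hXk, metroF_accept (hv k) hvk (hu _),
          metroF_accept hYpos (hYlt.le.trans hvk) (hu _)]

/-- **Backward runs couple below a later maximum.** If `0 ≤ k < n` and
`v k ≤ max {v (k+1), …, v n}`, then the backward runs started at `k` and at `k+1`
agree: `A k = A (k+1)`. -/
theorem backward_coupling_of_le_max
    (n : ℕ) (v u : ℕ → ℝ) (hv : ∀ i, 0 < v i)
    (hu : ∀ i, u i ∈ Set.Icc (0 : ℝ) 1) (k : ℕ) (hkn : k < n)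
    (hmax : v k ≤ (Finset.Icc (k + 1) n).sup' (Finset.nonempty_Icc.mpr hkn) v) :
    backA v u n k = backA v u n (k + 1) := by
  obtain ⟨j, hj, hje⟩ := Finset.exists_mem_eq_sup' (Finset.nonempty_Icc.mpr hkn) v
  rw [hje] at hmax
  rw [Finset.mem_Icc] at hj
  have h1 : n - k = (n - k - 1) + 1 := by omega
  have h2 : n - (k + 1) = n - k - 1 := by omega
  unfold backA
  rw [h1, h2]
  exact backB_couple v u hv hu k (n - k - 1) ⟨j - (k + 1), by omega,
    by have : k + 1 + (j - (k + 1)) = j := by omega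
       rw [this]; exact hmax⟩
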